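/- arXiv:1711.06300 — 2 statements merged into one kernel-verified Lean document; each statement's English description precedes it below -/
import Mathlib

section
/- Let h be a positive integer, let t be an index tuple with indices from {0,...,h-1}, and let (a:b) be a string with indices from {0,...,h-2}. Then the concatenated tuple (t, a:b) satisfies the SIP if and only if t satisfies the SIP and no index c ∈ {a, a+1, ..., b} belongs to heads(t), where heads(t) is the set of string heads {b_i} of the column standard form of t. -/
/-- The Successor Infix Property. -/
def SIP (l : List ℕ) : Prop :=
  ∀ (a b : ℕ) (ha : a < l.length) (hb : b < l.length), a < b →
    l.get ⟨a, ha⟩ = l.get ⟨b, hb⟩ →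
    ∃ (c : ℕ) (hc : c < l.length), a < c ∧ c < b ∧
      l.get ⟨c, hc⟩ = l.get ⟨a, ha⟩ + 1

/-- Equivalence of index tuples: generated by interchanging two adjacent
distinct commuting indices (indices `x ≠ y` with `|x - y| ≠ 1`). -/
inductive TupleEquiv : List ℕ → List ℕ → Prop
  | refl (l : List ℕ) : TupleEquiv l l
  | swap (u v : List ℕ) (x y : ℕ) (hxy : x ≠ y) (h1 : x ≠ y + 1) (h2 : y ≠ x + 1) :
      TupleEquiv (u ++ x :: y :: v) (u ++ y :: x :: v)
  | trans {l1 l2 l3 : List ℕ} :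
      TupleEquiv l1 l2 → TupleEquiv l2 l3 → TupleEquiv l1 l3

/-- The tuple `(a_{s-1}:b_{s-1}, ..., a_0:b_0)` as a list, heads decreasing
left to right. -/
def csfList (s : ℕ) (a b : ℕ → ℕ) : List ℕ :=
  ((List.range s).reverse).flatMap fun j => List.range' (a j) (b j + 1 - a j)

/-- `x` is a head of the column standard form of `t`: some tuple in column
standard form equivalent to `t` has `x` among its string heads. -/
def IsHead (t : List ℕ) (x : ℕ) : Prop :=
  ∃ (s : ℕ) (a b : ℕ → ℕ),
    (∀ i j : ℕ, i < j → j < s → b i < b j) ∧ (∀ j < s, a j ≤ b j) ∧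
    TupleEquiv t (csfList s a b) ∧ ∃ j < s, b j = x

def SIP' (l : List ℕ) : Prop :=
  ∀ (x : ℕ) (u v w : List ℕ), l = u ++ x :: (v ++ x :: w) → (x + 1) ∈ v

lemma sip_iff_sip' (l : List ℕ) : SIP l ↔ SIP' l := by
  constructor
  · intro h x u v w hl
    have ha : u.length < l.length := by simp [hl]
    have hb : u.length + v.length + 1 < l.length := by simp [hl]; omega
    have hga : l.get ⟨u.length, ha⟩ = x := by
      simp [hl, List.getElem_append_right (le_refl u.length)]
    have hgb : l.get ⟨u.length + v.length + 1, hb⟩ = x := by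
      have h2 : l = (u ++ x :: v) ++ x :: w := by simp [hl]
      have hlen : u.length + v.length + 1 = (u ++ x :: v).length := by simp; omega
      simp only [List.get_eq_getElem, h2, hlen]
      rw [List.getElem_append_right (le_refl _)]
      simp
    obtain ⟨c, hc, hac, hcb, hgc⟩ := h u.length (u.length + v.length + 1) ha hb (by omega)
      (hga.trans hgb.symm)
    rw [hga] at hgc
    have hcl : c - (u.length + 1) < v.length := by omega
    have hcl2 : c - (u.length + 1) < v.length := hcl
    have : l.get ⟨c, hc⟩ = v[c - (u.length + 1)]'hcl2 := by
      have h2 : l = (u ++ [x]) ++ (v ++ x :: w) := by simp [hl]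
      have hc2 : c < ((u ++ [x]) ++ (v ++ x :: w)).length := h2 ▸ hc
      have e1 : ((u ++ [x]) ++ (v ++ x :: w))[c]'hc2 = (v ++ x :: w)[c - (u.length + 1)]'(by simp; omega) := by
        rw [List.getElem_append_right (by simp; omega)]
        congr 1; simp
      have e2 : (v ++ x :: w)[c - (u.length + 1)]'(by simp; omega) = v[c - (u.length + 1)]'hcl2 :=
        List.getElem_append_left hcl2
      simp only [List.get_eq_getElem]
      rw [List.getElem_of_eq h2 hc, e1, e2]
    rw [this] at hgc
    exact hgc ▸ List.getElem_mem _
  · intro h a b ha hb hab hg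
    set x := l.get ⟨a, ha⟩ with hx
    have hdl : l = l.take a ++ x :: ((l.drop (a+1)).take (b - a - 1) ++ x :: l.drop (b+1)) := by
      have h1 : l = l.take a ++ l.drop a := (List.take_append_drop a l).symm
      have h2 : l.drop a = x :: l.drop (a+1) := by
        rw [List.drop_eq_getElem_cons ha]; simp [hx]
      have h3 : l.drop (a+1) = (l.drop (a+1)).take (b-a-1) ++ (l.drop (a+1)).drop (b-a-1) :=
        (List.take_append_drop _ _).symm
      have h4 : (l.drop (a+1)).drop (b-a-1) = l.drop b := by
        rw [List.drop_drop]; congr 1; omega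
      have h5 : l.drop b = x :: l.drop (b+1) := by
        rw [List.drop_eq_getElem_cons hb]
        congr 1
        simpa [hx] using hg.symm
      conv_lhs => rw [h1, h2, h3, h4, h5]
    have hm := h x _ _ _ hdl
    obtain ⟨k, hk, hgk⟩ := List.getElem_of_mem hm
    have hk' : k < b - a - 1 := lt_of_lt_of_le hk (by simp)
    have hkl : a + 1 + k < l.length := by
      have h5 := hk
      simp [List.length_take] at h5
      omega
    refine ⟨a + 1 + k, hkl, by omega, by omega, ?_⟩
    rw [List.getElem_take, List.getElem_drop] at hgk
    simpa [← hx] using hgk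

def hp (x z : ℕ) : Bool := z == x || z == x + 1

lemma hp_iff {x z : ℕ} : hp x z = true ↔ z = x ∨ z = x + 1 := by
  simp [hp]

/-- first filtered element gives a decomposition -/
lemma filter_head_decomp (f : ℕ → Bool) :
    ∀ (l : List ℕ) (p : ℕ) (B : List ℕ), l.filter f = p :: B →
      ∃ u w, l = u ++ p :: w ∧ u.filter f = [] ∧ w.filter f = B := by
  intro l
  induction l with
  | nil => intro p B h; simp at h
  | cons z l' ih =>
    intro p B h
    by_cases hz : f z
    · rw [List.filter_cons_of_pos hz] at h
      obtain ⟨rfl, rfl⟩ : z = p ∧ l'.filter f = B := by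
        constructor <;> [exact (List.cons_eq_cons.mp h).1; exact (List.cons_eq_cons.mp h).2]
      exact ⟨[], l', by simp, by simp, rfl⟩
    · rw [List.filter_cons_of_neg (by simpa using hz)] at h
      obtain ⟨u, w, rfl, hu, hw⟩ := ih p B h
      exact ⟨z :: u, w, by simp, by simp [List.filter_cons_of_neg (by simpa using hz), hu], hw⟩

lemma filter_adj_decomp (f : ℕ → Bool) :
    ∀ (l : List ℕ) (A : List ℕ) (p q : ℕ) (B : List ℕ), l.filter f = A ++ p :: q :: B →
      ∃ u v w, l = u ++ p :: (v ++ q :: w) ∧ v.filter f = [] := by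
  intro l
  induction l with
  | nil => intro A p q B h; simp at h
  | cons z l' ih =>
    intro A p q B h
    by_cases hz : f z
    · rw [List.filter_cons_of_pos hz] at h
      cases A with
      | nil =>
        simp at h
        obtain ⟨rfl, h2⟩ := h
        obtain ⟨v, w, rfl, hv, _⟩ := filter_head_decomp f l' q B h2
        exact ⟨[], v, w, by simp, hv⟩
      | cons a A' =>
        simp at h
        obtain ⟨rfl, h2⟩ := h
        obtain ⟨u, v, w, rfl, hv⟩ := ih A' p q B h2
        exact ⟨z :: u, v, w, by simp, hv⟩
    · rw [List.filter_cons_of_neg (by simpa using hz)] at h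
      obtain ⟨u, v, w, rfl, hv⟩ := ih A p q B h
      exact ⟨z :: u, v, w, by simp, hv⟩

def SIP'' (l : List ℕ) : Prop :=
  ∀ (x : ℕ) (A B : List ℕ), l.filter (hp x) ≠ A ++ x :: x :: B

lemma sip'_iff_sip'' (l : List ℕ) : SIP' l ↔ SIP'' l := by
  constructor
  · intro h x A B hf
    obtain ⟨u, v, w, hl, hv⟩ := filter_adj_decomp (hp x) l A x x B hf
    have hmem := h x u v w hl
    have : (x+1) ∈ v.filter (hp x) := List.mem_filter.mpr ⟨hmem, by simp [hp]⟩
    rw [hv] at this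
    simp at this
  · intro h x u v w hl
    by_contra hxv
    apply h x (u.filter (hp x)) ((v.filter (hp x)).tail ++ (if (v.filter (hp x)).isEmpty then [] else [x]) ++ w.filter (hp x))
    have hvx : ∀ z ∈ v.filter (hp x), z = x := by
      intro z hz
      have := List.mem_filter.mp hz
      rcases hp_iff.mp this.2 with h1 | h1
      · exact h1
      · exact absurd (h1 ▸ this.1) hxv
    rw [hl]
    have hx : hp x x = true := by simp [hp]
    cases hfv : v.filter (hp x) with
    | nil => simp [List.filter_append, List.filter_cons_of_pos hx, hfv]
    | cons z m =>
      have hz : z = x := hvx z (hfv ▸ List.mem_cons_self)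
      subst hz
      simp [List.filter_append, List.filter_cons_of_pos hx, hfv]

lemma TupleEquiv.symm {l1 l2 : List ℕ} (h : TupleEquiv l1 l2) : TupleEquiv l2 l1 := by
  induction h with
  | refl l => exact .refl l
  | swap u v x y hxy h1 h2 => exact .swap u v y x hxy.symm h2 h1
  | trans h1 h2 ih1 ih2 => exact .trans ih2 ih1

lemma TupleEquiv.appendRight {l1 l2 : List ℕ} (r : List ℕ) (h : TupleEquiv l1 l2) :
    TupleEquiv (l1 ++ r) (l2 ++ r) := by
  induction h with
  | refl l => exact .refl _
  | swap u v x y hxy h1 h2 =>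
    have := TupleEquiv.swap u (v ++ r) x y hxy h1 h2
    simpa using this
  | trans h1 h2 ih1 ih2 => exact .trans ih1 ih2

lemma TupleEquiv.appendLeft {l1 l2 : List ℕ} (r : List ℕ) (h : TupleEquiv l1 l2) :
    TupleEquiv (r ++ l1) (r ++ l2) := by
  induction h with
  | refl l => exact .refl _
  | swap u v x y hxy h1 h2 =>
    have := TupleEquiv.swap (r ++ u) v x y hxy h1 h2
    simpa using this
  | trans h1 h2 ih1 ih2 => exact .trans ih1 ih2

/-- moving an element left past a block it commutes with -/
lemma TupleEquiv.commute (x : ℕ) :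
    ∀ (m u v : List ℕ), (∀ z ∈ m, z ≠ x ∧ z ≠ x + 1 ∧ x ≠ z + 1) →
      TupleEquiv (u ++ m ++ x :: v) (u ++ x :: (m ++ v)) := by
  intro m
  induction m with
  | nil => intro u v _; simpa using TupleEquiv.refl (u ++ x :: v)
  | cons z m' ih =>
    intro u v hz
    have step1 : TupleEquiv (u ++ (z :: m') ++ x :: v) ((u ++ [z]) ++ x :: (m' ++ v)) := by
      have := ih (u ++ [z]) v (fun a ha => hz a (List.mem_cons_of_mem _ ha))
      simpa using this
    have hz0 := hz z List.mem_cons_self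
    have step2 : TupleEquiv (u ++ z :: x :: (m' ++ v)) (u ++ x :: z :: (m' ++ v)) :=
      TupleEquiv.swap u (m' ++ v) z x (hz0.1) (fun hh => hz0.2.1 hh) (fun hh => hz0.2.2 hh)
    refine .trans step1 (by simpa using step2)

lemma TupleEquiv.filter_eq {l1 l2 : List ℕ} (h : TupleEquiv l1 l2) (x : ℕ) :
    l1.filter (hp x) = l2.filter (hp x) := by
  induction h with
  | refl l => rfl
  | swap u v a c hxy h1 h2 =>
    simp only [List.filter_append, List.filter_cons]
    by_cases ha : hp x a = true <;> by_cases hc : hp x c = true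
    · exfalso
      rcases hp_iff.mp ha with rfl | rfl <;> rcases hp_iff.mp hc with e | e <;> omega
    · simp [ha, hc]
    · simp [ha, hc]
    · simp [ha, hc]
  | trans h1 h2 ih1 ih2 => exact ih1.trans ih2

lemma SIP'.of_equiv {l1 l2 : List ℕ} (h : TupleEquiv l1 l2) (hs : SIP' l1) : SIP' l2 := by
  rw [sip'_iff_sip''] at hs ⊢
  intro x A B hf
  exact hs x A B ((h.filter_eq x) ▸ hf)

lemma SIP'.prefix {A B : List ℕ} (h : SIP' (A ++ B)) : SIP' A := by
  intro x u v w hA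
  exact h x u v (w ++ B) (by simp [hA])

def colList (c : ℕ × ℕ) : List ℕ := List.range' c.1 (c.2 + 1 - c.1)

/-- column lists, rightmost (smallest head) column first -/
def rlist : List (ℕ × ℕ) → List ℕ
  | [] => []
  | c :: cs => rlist cs ++ colList c

def Ok (cs : List (ℕ × ℕ)) : Prop := ∀ c ∈ cs, c.1 ≤ c.2

def Srt (cs : List (ℕ × ℕ)) : Prop := List.Pairwise (· < ·) (cs.map Prod.snd)

lemma split_mid {M N u v : List ℕ} {x : ℕ} (h : M ++ N = u ++ x :: v) :
    (∃ v₁, M = u ++ x :: v₁ ∧ v = v₁ ++ N) ∨ (∃ u₁, N = u₁ ++ x :: v ∧ u = M ++ u₁) := by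
  rcases List.append_eq_append_iff.mp h with ⟨a', ha1, ha2⟩ | ⟨c', hc1, hc2⟩
  · right; exact ⟨a', ha2, ha1⟩
  · cases c' with
    | nil => right; exact ⟨[], by simpa using hc2.symm, by simpa using hc1.symm⟩
    | cons z v₁ =>
      left
      obtain ⟨rfl, h2⟩ := List.cons_eq_cons.mp hc2
      exact ⟨v₁, hc1, h2⟩

lemma range'_split : ∀ (n s : ℕ) (u v : List ℕ) (x : ℕ), List.range' s n = u ++ x :: v →
    u = List.range' s (x - s) ∧ v = List.range' (x + 1) (s + n - (x + 1)) := by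
  intro n
  induction n with
  | zero => intro s u v x h; simp at h
  | succ n ih =>
    intro s u v x h
    rw [List.range'_succ] at h
    cases u with
    | nil =>
      simp at h
      obtain ⟨rfl, rfl⟩ := h
      refine ⟨by simp, by congr 1; omega⟩
    | cons z u' =>
      obtain ⟨hz, h2⟩ := List.cons_eq_cons.mp h
      subst hz
      obtain ⟨hu, hv⟩ := ih (s + 1) u' v x h2
      have hxz : s + 1 ≤ x := by
        have : x ∈ List.range' (s+1) n := h2 ▸ (by simp)
        exact (List.mem_range'_1.mp this).1
      constructor
      · rw [hu]
        have : x - s = (x - (s+1)) + 1 := by omega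
        rw [this, List.range'_succ]
      · rw [hv]; congr 1; omega

/-- last occurrence extraction -/
lemma last_occ_mem {x : ℕ} : ∀ (m : List ℕ), x ∈ m → ∃ m₁ v₂, m = m₁ ++ x :: v₂ ∧ x ∉ v₂ := by
  intro m
  induction m with
  | nil => simp
  | cons z m' ih =>
    intro hx
    by_cases hxm : x ∈ m'
    · obtain ⟨m₁, v₂, rfl, hnx⟩ := ih hxm
      exact ⟨z :: m₁, v₂, by simp, hnx⟩
    · have hz : z = x := by
        rcases List.eq_or_mem_of_mem_cons hx with h' | h'
        · exact h'.symm
        · exact absurd h' hxm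
      exact ⟨[], m', by simp [hz], hxm⟩

lemma last_occ {x : ℕ} (m u : List ℕ) : ∃ u₂ v₂, u ++ x :: m = u₂ ++ x :: v₂ ∧ x ∉ v₂ ∧
    ∀ z ∈ v₂, z ∈ m := by
  by_cases hxm : x ∈ m
  · obtain ⟨m₁, v₂, rfl, hnx⟩ := last_occ_mem m hxm
    exact ⟨u ++ x :: m₁, v₂, by simp, hnx, fun z hz => by simp [hz]⟩
  · exact ⟨u, m, rfl, hxm, fun z hz => hz⟩

/-- Lemma A : appending an increasing run -/
lemma sip'_append_run {M : List ℕ} {p n : ℕ} (hM : SIP' M)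
    (hocc : ∀ x u v, p ≤ x → x < p + n → M = u ++ x :: v → x ∉ v → (x + 1) ∈ v) :
    SIP' (M ++ List.range' p n) := by
  intro x u v w hl
  rcases split_mid hl with ⟨v₁, hM1, hv⟩ | ⟨u₁, hR, hu⟩
  · -- first x in M
    rcases split_mid hv.symm with ⟨w₁, hv1, hw⟩ | ⟨u₁, hR, hv2⟩
    · -- both x in M
      exact hM x u v w₁ (by rw [hM1, hv1])
    · -- second x in R
      have hxR : x ∈ List.range' p n := by rw [hR]; simp
      obtain ⟨hpx, hxpn⟩ := List.mem_range'_1.mp hxR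
      obtain ⟨u₂, v₂, he, hnx, hsub⟩ := last_occ v₁ u
      have hx1 : (x+1) ∈ v₂ := hocc x u₂ v₂ hpx hxpn (hM1.trans he) hnx
      rw [hv2]
      exact List.mem_append_left _ (hsub _ hx1)
  · -- first x in R : second x also in R, contradiction with nodup
    exfalso
    have hnd : (List.range' p n).Nodup := List.nodup_range'
    rw [hR] at hnd
    have := List.Nodup.sublist (by simp : (x :: (v ++ x :: w)).Sublist (u₁ ++ x :: (v ++ x :: w))) hnd
    simp [List.nodup_cons] at this

lemma srt_cons_head {p q : ℕ} {cs : List (ℕ × ℕ)} (h : Srt ((p,q) :: cs)) :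
    ∀ y ∈ cs.map Prod.snd, q < y := by
  have := (List.pairwise_cons.mp h).1
  simpa using this

lemma srt_cons_tail {p q : ℕ} {cs : List (ℕ × ℕ)} (h : Srt ((p,q) :: cs)) : Srt cs :=
  (List.pairwise_cons.mp h).2

/-- main invariant of sorted column lists -/
lemma rlist_inv : ∀ (cs : List (ℕ × ℕ)), Ok cs → Srt cs →
    SIP' (rlist cs) ∧
    (∀ x u v, rlist cs = u ++ x :: v → x ∉ v → (x + 1) ∈ v ∨ x ∈ cs.map Prod.snd) := by
  intro cs
  induction cs with
  | nil =>
    intro _ _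
    constructor
    · intro x u v w hl; simp [rlist] at hl
    · intro x u v hl; simp [rlist] at hl
  | cons c cs' ih =>
    intro hok hsrt
    obtain ⟨p, q⟩ := c
    have hpq : p ≤ q := hok (p,q) (by simp)
    obtain ⟨ih1, ih2⟩ := ih (fun c hc => hok c (List.mem_cons_of_mem _ hc)) (srt_cons_tail hsrt)
    have hocc : ∀ x u v, p ≤ x → x < p + (q + 1 - p) → rlist cs' = u ++ x :: v → x ∉ v →
        (x + 1) ∈ v := by
      intro x u v hpx hxq hd hnx
      rcases ih2 x u v hd hnx with h' | h'
      · exact h'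
      · exact absurd (srt_cons_head hsrt x h') (by omega)
    have hcol : rlist ((p,q) :: cs') = rlist cs' ++ List.range' p (q + 1 - p) := rfl
    constructor
    · rw [hcol]; exact sip'_append_run ih1 hocc
    · intro x u v hl hnx
      rw [hcol] at hl
      rcases split_mid hl with ⟨v₁, hM1, hv⟩ | ⟨u₁, hR, hu⟩
      · -- x in rlist cs'
        have hnx1 : x ∉ v₁ := fun hc => hnx (hv ▸ List.mem_append_left _ hc)
        rcases ih2 x u v₁ hM1 hnx1 with h' | h'
        · exact Or.inl (hv ▸ List.mem_append_left _ h')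
        · exact Or.inr (by simp [h'])
      · -- x in the new column
        obtain ⟨hu1, hv1⟩ := range'_split _ _ _ _ _ hR
        have hx : x ∈ List.range' p (q+1-p) := by rw [hR]; simp
        obtain ⟨hpx, hxq⟩ := List.mem_range'_1.mp hx
        by_cases hxq' : x = q
        · exact Or.inr (by simp [hxq'])
        · left
          rw [hv1]
          refine List.mem_range'_1.mpr ⟨le_refl _, ?_⟩
          omega

lemma colList_eq {p q : ℕ} (hpq : p ≤ q) :
    colList (p, q) = List.range' p (q - p) ++ [q] := by
  have h1 : q + 1 - p = (q - p) + 1 := by omega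
  have h2 : p + 1 * (q - p) = q := by omega
  rw [colList, h1, List.range'_concat, h2]

lemma insertCol (x : ℕ) : ∀ (cs : List (ℕ × ℕ)), Ok cs → Srt cs →
    SIP' (rlist cs ++ [x]) →
    ∃ ds, Ok ds ∧ Srt ds ∧ TupleEquiv (rlist cs ++ [x]) (rlist ds) ∧
      ∀ y ∈ ds.map Prod.snd, y ∈ cs.map Prod.snd ∨ y = x := by
  intro cs
  induction cs with
  | nil =>
    intro _ _ _
    refine ⟨[(x,x)], by simp [Ok], by simp [Srt], ?_, by simp⟩
    have he : rlist [(x,x)] = rlist [] ++ [x] := by simp [rlist, colList]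
    rw [he]
    exact .refl _
  | cons c cs' ih =>
    intro hok hsrt hsip
    obtain ⟨p, q⟩ := c
    have hpq : p ≤ q := hok (p,q) (by simp)
    have hok' : Ok cs' := fun c hc => hok c (List.mem_cons_of_mem _ hc)
    have hsrt' : Srt cs' := srt_cons_tail hsrt
    have hcol : rlist ((p,q) :: cs') = rlist cs' ++ colList (p,q) := rfl
    rcases lt_trichotomy x q with hlt | heq | hgt
    · -- x < q : new rightmost column (x,x)
      refine ⟨(x,x) :: (p,q) :: cs', ?_, ?_, ?_, ?_⟩
      · intro c hc
        rcases List.eq_or_mem_of_mem_cons hc with h' | h'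
        · simp [h']
        · exact hok c h'
      · refine List.pairwise_cons.mpr ⟨?_, hsrt⟩
        intro y hy
        simp only [List.map_cons, List.mem_cons] at hy
        rcases hy with rfl | hy
        · exact hlt
        · exact lt_trans hlt (srt_cons_head hsrt y hy)
      · have he : rlist ((x,x) :: (p,q) :: cs') = rlist ((p,q) :: cs') ++ [x] := by
          simp [rlist, colList]
        rw [he]
        exact .refl _
      · intro y hy
        simp only [List.map_cons, List.mem_cons] at hy ⊢
        tauto
    · -- x = q : SIP violated
      exfalso
      have hd : rlist ((p,q) :: cs') ++ [x] =
          (rlist cs' ++ List.range' p (q - p)) ++ q :: ([] ++ q :: []) := by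
        rw [heq, hcol, colList_eq hpq]
        simp
      have := hsip q _ _ _ hd
      simp at this
    · -- x > q
      by_cases hx1 : x = q + 1
      · -- merge
        subst hx1
        have hxh : ¬ (q + 1) ∈ cs'.map Prod.snd := by
          intro hmem
          cases cs' with
          | nil => simp at hmem
          | cons c₁ cs'' =>
            obtain ⟨p₁, q₁⟩ := c₁
            have hp₁q₁ : p₁ ≤ q₁ := hok' (p₁,q₁) (by simp)
            have hq₁ : q₁ = q + 1 := by
              simp only [List.map_cons, List.mem_cons] at hmem
              rcases hmem with h' | h'
              · exact h'.symm
              · have h1 := srt_cons_head hsrt q₁ (by simp)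
                have h2 := srt_cons_head hsrt' (q+1) h'
                omega
            exfalso
            have hd : rlist ((p,q) :: (p₁,q₁) :: cs'') ++ [q+1] =
                (rlist cs'' ++ List.range' p₁ (q₁ - p₁)) ++
                  (q+1) :: (colList (p,q) ++ (q+1) :: []) := by
              rw [hcol]
              show (rlist cs'' ++ colList (p₁,q₁)) ++ colList (p,q) ++ [q+1] = _
              rw [colList_eq hp₁q₁, hq₁]
              simp
            have := hsip (q+1) _ _ _ hd
            rw [colList, List.mem_range'_1] at this
            omega
        refine ⟨(p, q+1) :: cs', ?_, ?_, ?_, ?_⟩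
        · intro c hc
          rcases List.eq_or_mem_of_mem_cons hc with h' | h'
          · rw [h']; show p ≤ q + 1; omega
          · exact hok' c h'
        · refine List.pairwise_cons.mpr ⟨?_, hsrt'⟩
          intro y hy
          have h1 := srt_cons_head hsrt y hy
          have h2 : y ≠ q + 1 := fun hc => hxh (hc ▸ hy)
          omega
        · have he : rlist ((p, q+1) :: cs') = rlist ((p,q) :: cs') ++ [q+1] := by
            rw [hcol]
            show rlist cs' ++ colList (p, q+1) = _
            rw [colList_eq (by omega : p ≤ q + 1)]
            simp [colList]
          rw [he]
          exact .refl _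
        · intro y hy
          simp only [List.map_cons, List.mem_cons] at hy ⊢
          tauto
      · -- x ≥ q + 2 : commute past the column and recurse
        have hx2 : q + 2 ≤ x := by omega
        have hcomm : ∀ z ∈ colList (p,q), z ≠ x ∧ z ≠ x + 1 ∧ x ≠ z + 1 := by
          intro z hz
          rw [colList, List.mem_range'_1] at hz
          omega
        have equiv1 : TupleEquiv (rlist cs' ++ colList (p,q) ++ [x])
            ((rlist cs' ++ [x]) ++ colList (p,q)) := by
          have := TupleEquiv.commute x (colList (p,q)) (rlist cs') []
          simp only [List.append_nil] at this
          have h2 := this hcomm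
          simpa using h2
        have hsipx : SIP' (rlist cs' ++ [x]) := by
          refine SIP'.prefix (B := colList (p,q)) ?_
          exact SIP'.of_equiv (by simpa [hcol] using equiv1) hsip
        obtain ⟨ds', hok2, hsrt2, hequiv2, hheads2⟩ := ih hok' hsrt' hsipx
        refine ⟨(p,q) :: ds', ?_, ?_, ?_, ?_⟩
        · intro c hc
          rcases List.eq_or_mem_of_mem_cons hc with h' | h'
          · rw [h']; exact hpq
          · exact hok2 c h'
        · refine List.pairwise_cons.mpr ⟨?_, hsrt2⟩
          intro y hy
          rcases hheads2 y hy with h' | h'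
          · exact srt_cons_head hsrt y h'
          · omega
        · have he : rlist ((p,q) :: ds') = rlist ds' ++ colList (p,q) := rfl
          rw [he, hcol]
          refine .trans equiv1 ?_
          exact TupleEquiv.appendRight _ hequiv2
        · intro y hy
          simp only [List.map_cons, List.mem_cons] at hy ⊢
          rcases hy with rfl | hy
          · tauto
          · rcases hheads2 y hy with h' | h' <;> tauto

lemma exists_cols {t : List ℕ} (h : SIP' t) :
    ∃ cs, Ok cs ∧ Srt cs ∧ TupleEquiv t (rlist cs) := by
  induction t using List.reverseRecOn with
  | nil => exact ⟨[], by simp [Ok], by simp [Srt], .refl _⟩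
  | append_singleton l x ih =>
    obtain ⟨cs, hok, hsrt, hequiv⟩ := ih (SIP'.prefix h)
    have hequiv2 : TupleEquiv (l ++ [x]) (rlist cs ++ [x]) := hequiv.appendRight [x]
    have hsip2 : SIP' (rlist cs ++ [x]) := SIP'.of_equiv hequiv2 h
    obtain ⟨ds, hok2, hsrt2, hequiv3, _⟩ := insertCol x cs hok hsrt hsip2
    exact ⟨ds, hok2, hsrt2, hequiv2.trans hequiv3⟩

lemma rlist_eq_csf : ∀ cs : List (ℕ × ℕ),
    csfList cs.length (fun j => (cs.getD j (0,0)).1) (fun j => (cs.getD j (0,0)).2) = rlist cs := by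
  intro cs
  induction cs with
  | nil => rfl
  | cons c cs' ih =>
    show csfList (cs'.length + 1) _ _ = rlist cs' ++ colList c
    rw [csfList, List.range_succ_eq_map, List.reverse_cons, List.flatMap_append,
      ← List.map_reverse, List.flatMap_map]
    have e1 : (fun (a:ℕ) => List.range' ((c :: cs').getD a.succ (0, 0)).1
          (((c :: cs').getD a.succ (0, 0)).2 + 1 - ((c :: cs').getD a.succ (0, 0)).1)) =
        (fun j => List.range' ((cs'.getD j (0, 0)).1)
          ((cs'.getD j (0,0)).2 + 1 - (cs'.getD j (0,0)).1)) := by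
      funext a
      simp
    rw [e1]
    have e2 : ([0].flatMap fun j =>
        List.range' ((c :: cs').getD j (0, 0)).1
          (((c :: cs').getD j (0, 0)).2 + 1 - ((c :: cs').getD j (0, 0)).1)) = colList c := by
      simp [colList]
    rw [e2]
    show csfList cs'.length _ _ ++ colList c = rlist cs' ++ colList c
    rw [ih]

lemma isHead_of {t : List ℕ} {cs : List (ℕ × ℕ)} (hok : Ok cs) (hsrt : Srt cs)
    (hequiv : TupleEquiv t (rlist cs)) {y : ℕ} (hy : y ∈ cs.map Prod.snd) : IsHead t y := by
  refine ⟨cs.length, fun j => (cs.getD j (0,0)).1, fun j => (cs.getD j (0,0)).2, ?_, ?_, ?_, ?_⟩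
  · intro i j hij hj
    have hp := List.pairwise_iff_get.mp (hsrt : List.Pairwise (· < ·) (cs.map Prod.snd)) ⟨i, by simpa using lt_trans hij hj⟩ ⟨j, by simpa using hj⟩ hij
    show (cs.getD i (0,0)).2 < (cs.getD j (0,0)).2
    rw [List.getD_eq_getElem cs (0,0) (lt_trans hij hj), List.getD_eq_getElem cs (0,0) hj]
    simpa using hp
  · intro j hj
    show (cs.getD j (0,0)).1 ≤ (cs.getD j (0,0)).2
    rw [List.getD_eq_getElem cs (0,0) hj]
    exact hok _ (List.getElem_mem _)
  · rw [rlist_eq_csf]; exact hequiv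
  · obtain ⟨k, hk, hky⟩ := List.mem_iff_getElem.mp hy
    have hkl : k < cs.length := by simpa using hk
    refine ⟨k, hkl, ?_⟩
    show (cs.getD k (0,0)).2 = y
    rw [List.getD_eq_getElem cs (0,0) hkl]
    simpa using hky

lemma csf_split {s : ℕ} {A B : ℕ → ℕ} {j0 : ℕ} (hj0 : j0 < s) :
    ∃ Y, csfList s A B = Y ++ List.range' (A j0) (B j0 + 1 - A j0) ++ csfList j0 A B := by
  refine ⟨((List.range' (j0+1) (s-j0-1)).reverse).flatMap
    (fun j => List.range' (A j) (B j + 1 - A j)), ?_⟩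
  have hr : List.range s = List.range (j0+1) ++ List.range' (j0+1) (s-j0-1) := by
    rw [List.range_eq_range', List.range_eq_range']
    have := @List.range'_append 0 (j0+1) (s-j0-1) 1
    simp only [one_mul, zero_add] at this
    rw [this]
    congr 1
    omega
  rw [csfList, hr, List.reverse_append, List.flatMap_append, List.range_succ,
    List.reverse_append]
  simp only [List.reverse_cons, List.reverse_nil, List.nil_append, List.flatMap_cons,
    List.flatMap_append]
  rw [csfList]
  simp [List.append_assoc]

lemma mem_csf_bound {m : ℕ} {A B : ℕ → ℕ} (hab : ∀ j < m, A j ≤ B j) {z : ℕ}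
    (hz : z ∈ csfList m A B) : ∃ j < m, z ≤ B j := by
  rw [csfList, List.mem_flatMap] at hz
  obtain ⟨j, hj, hzj⟩ := hz
  have hjm : j < m := by simpa using hj
  have := List.mem_range'_1.mp hzj
  exact ⟨j, hjm, by omega⟩

lemma not_sip_head {s : ℕ} {A B : ℕ → ℕ} {a b c : ℕ}
    (hinc : ∀ i j : ℕ, i < j → j < s → B i < B j) (hab' : ∀ j < s, A j ≤ B j)
    {j0 : ℕ} (hj0 : j0 < s) (hBj0 : B j0 = c) (hac : a ≤ c) (hcb : c ≤ b) :
    ¬ SIP' (csfList s A B ++ List.range' a (b + 1 - a)) := by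
  intro hsip
  obtain ⟨Y, hY⟩ := csf_split (A := A) (B := B) hj0
  have hAc : A j0 ≤ c := hBj0 ▸ hab' j0 hj0
  have hcol : List.range' (A j0) (B j0 + 1 - A j0) = List.range' (A j0) (c - A j0) ++ [c] := by
    rw [hBj0]
    have h1 : c + 1 - A j0 = (c - A j0) + 1 := by omega
    have h2 : A j0 + 1 * (c - A j0) = c := by omega
    rw [h1, List.range'_concat, h2]
  have hstr : List.range' a (b + 1 - a) =
      List.range' a (c - a) ++ c :: List.range' (c+1) (b - c) := by
    have h1 : List.range' a (c-a) ++ List.range' (a + 1 * (c-a)) ((b+1-c)) =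
        List.range' a ((b+1-c) + (c-a)) := by rw [Nat.add_comm (b+1-c)]; exact @List.range'_append a (c-a) (b+1-c) 1
    have h2 : a + 1 * (c - a) = c := by omega
    have h3 : (b+1-c) + (c-a) = b + 1 - a := by omega
    rw [h2, h3] at h1
    rw [← h1]
    congr 1
    have h4 : b + 1 - c = (b - c) + 1 := by omega
    rw [h4, List.range'_succ]
  have hdec : csfList s A B ++ List.range' a (b + 1 - a) =
      (Y ++ List.range' (A j0) (c - A j0)) ++
        c :: ((csfList j0 A B ++ List.range' a (c - a)) ++ c :: List.range' (c+1) (b - c)) := by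
    rw [hY, hcol, hstr]
    simp [List.append_assoc]
  have hmem := hsip c _ _ _ hdec
  rcases List.mem_append.mp hmem with h' | h'
  · obtain ⟨j, hjlt, hle⟩ := mem_csf_bound (fun j hj => hab' j (lt_trans hj hj0)) h'
    have := hinc j j0 hjlt hj0
    omega
  · have := List.mem_range'_1.mp h'
    omega

/-- for a tuple `t` with indices from `{0,...,h-1}` and a string
`(a:b)` with indices from `{0,...,h-2}`, the tuple `(t, a:b)` satisfies the SIP
iff `t` satisfies the SIP and no index `c ∈ {a,...,b}` is a head of the column
standard form of `t`. -/
theorem stmt16 (h : ℕ) (hh : 0 < h) (t : List ℕ) (ht : ∀ x ∈ t, x < h)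
    (a b : ℕ) (hab : a ≤ b) (hb : b ≤ h - 2) :
    SIP (t ++ List.range' a (b + 1 - a)) ↔
      (SIP t ∧ ∀ c : ℕ, a ≤ c → c ≤ b → ¬ IsHead t c) := by
  rw [sip_iff_sip', sip_iff_sip']
  constructor
  · intro hs
    refine ⟨SIP'.prefix hs, ?_⟩
    rintro c hac hcb ⟨s, A, B, hinc, hab', hequiv, j0, hj0, hBj0⟩
    exact not_sip_head hinc hab' hj0 hBj0 hac hcb
      (SIP'.of_equiv (hequiv.appendRight _) hs)
  · rintro ⟨hst, hnh⟩
    obtain ⟨cs, hok, hsrt, hequiv⟩ := exists_cols hst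
    have hinv := rlist_inv cs hok hsrt
    have hsip2 : SIP' (rlist cs ++ List.range' a (b + 1 - a)) := by
      refine sip'_append_run hinv.1 ?_
      intro x u v hax hxb hd hnx
      rcases hinv.2 x u v hd hnx with h' | h'
      · exact h'
      · exact absurd (isHead_of hok hsrt hequiv h') (hnh x hax (by omega))
    exact SIP'.of_equiv ((hequiv.appendRight _).symm) hsip2
end

section
/- Let t = (a_s:b_s, ..., a_2:b_2, a_1:b_1) be a nonempty index tuple in column standard form with indices from {0,...,k-1}, k ≥ 1, and let x ∈ {0,...,b_s - 1} be an index such that (t, x) satisfies the SIP. Then the number of strings in the column standard form of (t, x) equals the number of strings of t (i.e., x is of Type I relative to t) if and only if x - 1 ∈ heads(t) = {b_1, ..., b_s}. In particular, x = 0 is always of Type II (the number of strings increases by one). -/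
/-- The column standard form of `l` has `m` strings. -/
def StringCount (l : List ℕ) (m : ℕ) : Prop :=
  ∃ (a b : ℕ → ℕ),
    (∀ i j : ℕ, i < j → j < m → b i < b j) ∧ (∀ j < m, a j ≤ b j) ∧
    TupleEquiv l (csfList m a b)

/-! ### string-counting function -/

def scf : List ℕ → ℕ
  | [] => 0
  | h :: t => scf t + (if h + 1 ∈ t then 0 else 1)

@[simp] lemma scf_nil : scf [] = 0 := rfl

lemma scf_cons (h : ℕ) (t : List ℕ) :
    scf (h :: t) = scf t + (if h + 1 ∈ t then 0 else 1) := rfl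

lemma scf_swap (u v : List ℕ) (x y : ℕ) (h1 : x ≠ y + 1) (h2 : y ≠ x + 1) :
    scf (u ++ x :: y :: v) = scf (u ++ y :: x :: v) := by
  induction u with
  | nil =>
    simp only [List.nil_append]
    rw [scf_cons, scf_cons, scf_cons, scf_cons]
    have e1 : (x + 1 ∈ y :: v) ↔ (x + 1 ∈ v) := by
      rw [List.mem_cons]
      exact or_iff_right (fun h => h2 h.symm)
    have e2 : (y + 1 ∈ x :: v) ↔ (y + 1 ∈ v) := by
      rw [List.mem_cons]
      exact or_iff_right (fun h => h1 h.symm)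
    rw [if_congr e1 rfl rfl, if_congr e2 rfl rfl]
    omega
  | cons h u ih =>
    simp only [List.cons_append]
    rw [scf_cons, scf_cons]
    have hm : (h + 1 ∈ u ++ x :: y :: v) ↔ (h + 1 ∈ u ++ y :: x :: v) := by
      simp only [List.mem_append, List.mem_cons]
      tauto
    rw [ih, if_congr hm rfl rfl]

lemma scf_equiv {l l' : List ℕ} (h : TupleEquiv l l') : scf l = scf l' := by
  induction h with
  | refl l => rfl
  | swap u v x y hxy h1 h2 => exact scf_swap u v x y h1 h2
  | trans h1 h2 ih1 ih2 => exact ih1.trans ih2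

lemma scf_range' (n c : ℕ) (v : List ℕ) :
    scf (List.range' c (n + 1) ++ v) = scf v + (if c + n + 1 ∈ v then 0 else 1) := by
  induction n generalizing c with
  | zero => simp [scf_cons, scf]
  | succ n ih =>
    rw [List.range'_succ]
    simp only [List.cons_append]
    rw [scf_cons]
    have : c + 1 ∈ List.range' (c + 1) (n + 1) ++ v := by
      rw [List.mem_append]
      left
      rw [List.mem_range']
      exact ⟨0, by omega, by omega⟩
    rw [if_pos this, ih (c + 1)]
    have h3 : c + 1 + n + 1 = c + (n + 1) + 1 := by omega
    rw [h3, Nat.add_zero]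

lemma csfList_succ (m : ℕ) (a b : ℕ → ℕ) :
    csfList (m + 1) a b = List.range' (a m) (b m + 1 - a m) ++ csfList m a b := by
  simp [csfList, List.range_succ]

lemma csfList_mem {v m : ℕ} {a b : ℕ → ℕ} (h : v ∈ csfList m a b) :
    ∃ j < m, a j ≤ v ∧ v ≤ b j := by
  simp only [csfList, List.mem_flatMap, List.mem_reverse, List.mem_range,
    List.mem_range'] at h
  obtain ⟨j, hj, i, hi, hv⟩ := h
  exact ⟨j, hj, by omega, by omega⟩

lemma csfList_mem_lt {m B : ℕ} {a b : ℕ → ℕ} (hm : ∀ j < m, b j < B) :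
    ∀ v ∈ csfList m a b, v < B := by
  intro v hv
  obtain ⟨j, hj, _, h2⟩ := csfList_mem hv
  exact lt_of_le_of_lt h2 (hm j hj)

lemma scf_csfList (m : ℕ) (a b : ℕ → ℕ)
    (hmono : ∀ i j : ℕ, i < j → j < m → b i < b j)
    (hab : ∀ j < m, a j ≤ b j) : scf (csfList m a b) = m := by
  induction m with
  | zero => rfl
  | succ m ih =>
    rw [csfList_succ]
    have habm : a m ≤ b m := hab m (by omega)
    have : b m + 1 - a m = (b m - a m) + 1 := by omega
    rw [this, scf_range']
    have hne : a m + (b m - a m) + 1 ∉ csfList m a b := by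
      intro h
      have : a m + (b m - a m) + 1 < b m := csfList_mem_lt
        (fun j hj => hmono j m hj (by omega)) _ h
      omega
    rw [if_neg hne, ih (fun i j h1 h2 => hmono i j h1 (by omega))
      (fun j hj => hab j (by omega))]

lemma scf_csfList_neg (m : ℕ) (a b : ℕ → ℕ) (x : ℕ)
    (hmono : ∀ i j : ℕ, i < j → j < m → b i < b j)
    (hab : ∀ j < m, a j ≤ b j)
    (hx : ∀ j < m, x ≠ b j + 1) :
    scf (csfList m a b ++ [x]) = m + 1 := by
  induction m with
  | zero => simp [csfList, scf]
  | succ m ih =>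
    rw [csfList_succ, List.append_assoc]
    have habm : a m ≤ b m := hab m (by omega)
    have e : b m + 1 - a m = (b m - a m) + 1 := by omega
    rw [e, scf_range']
    have hne : a m + (b m - a m) + 1 ∉ csfList m a b ++ [x] := by
      intro h
      rw [List.mem_append] at h
      rcases h with h | h
      · have : a m + (b m - a m) + 1 < b m := csfList_mem_lt
          (fun j hj => hmono j m hj (by omega)) _ h
        omega
      · simp at h
        have := hx m (by omega)
        omega
    rw [if_neg hne, ih (fun i j h1 h2 => hmono i j h1 (by omega))
      (fun j hj => hab j (by omega)) (fun j hj => hx j (by omega))]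

lemma scf_csfList_pos (m : ℕ) (a b : ℕ → ℕ) (x : ℕ)
    (hmono : ∀ i j : ℕ, i < j → j < m → b i < b j)
    (hab : ∀ j < m, a j ≤ b j)
    (hx : ∃ j < m, x = b j + 1) :
    scf (csfList m a b ++ [x]) = m := by
  induction m with
  | zero => obtain ⟨j, hj, _⟩ := hx; omega
  | succ m ih =>
    rw [csfList_succ, List.append_assoc]
    have habm : a m ≤ b m := hab m (by omega)
    have e : b m + 1 - a m = (b m - a m) + 1 := by omega
    rw [e, scf_range']
    obtain ⟨j, hj, hxe⟩ := hx
    by_cases hjm : j = m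
    · rw [hjm] at hxe
      have hmem : a m + (b m - a m) + 1 ∈ csfList m a b ++ [x] := by
        rw [List.mem_append, List.mem_singleton]
        exact Or.inr (by omega)
      rw [if_pos hmem]
      rw [scf_csfList_neg m a b x (fun i j h1 h2 => hmono i j h1 (by omega))
        (fun j' hj' => hab j' (by omega))
        (fun j' hj' h => by have h2 := hmono j' m hj' (by omega); omega)]
    · have hjm' : j < m := by omega
      have hne : a m + (b m - a m) + 1 ∉ csfList m a b ++ [x] := by
        intro h
        rw [List.mem_append] at h
        rcases h with h | h
        · have : a m + (b m - a m) + 1 < b m := csfList_mem_lt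
            (fun j' hj' => hmono j' m hj' (by omega)) _ h
          omega
        · simp at h
          have := hmono j m hjm' (by omega)
          omega
      rw [if_neg hne, ih (fun i j h1 h2 => hmono i j h1 (by omega))
        (fun j' hj' => hab j' (by omega)) ⟨j, hjm', hxe⟩]

lemma stringCount_scf {l : List ℕ} {m : ℕ} (h : StringCount l m) : scf l = m := by
  obtain ⟨a, b, hmono, hab, hequiv⟩ := h
  rw [scf_equiv hequiv, scf_csfList m a b hmono hab]

/-! ### structural lemmas -/

lemma flatMap_congr_fun {l : List ℕ} {f g : ℕ → List ℕ}
    (h : ∀ i ∈ l, f i = g i) : l.flatMap f = l.flatMap g := by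
  induction l with
  | nil => rfl
  | cons a l ih =>
    rw [List.flatMap_cons, List.flatMap_cons, h a List.mem_cons_self,
      ih (fun i hi => h i (List.mem_cons_of_mem a hi))]

lemma csfList_congr {m : ℕ} {a b a' b' : ℕ → ℕ}
    (ha : ∀ i < m, a i = a' i) (hb : ∀ i < m, b i = b' i) :
    csfList m a b = csfList m a' b' := by
  unfold csfList
  apply flatMap_congr_fun
  intro i hi
  rw [List.mem_reverse, List.mem_range] at hi
  rw [ha i hi, hb i hi]

lemma csfList_split (m i : ℕ) (a b : ℕ → ℕ) (h : i ≤ m) :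
    csfList m a b =
      ((List.range' i (m - i)).reverse.flatMap fun j =>
        List.range' (a j) (b j + 1 - a j)) ++ csfList i a b := by
  induction m with
  | zero =>
    have : i = 0 := by omega
    subst this
    rfl
  | succ m ih =>
    by_cases him : i = m + 1
    · subst him
      simp
    · have him' : i ≤ m := by omega
      have e : m + 1 - i = (m - i) + 1 := by omega
      rw [csfList_succ, ih him', e, List.range'_concat]
      have e2 : i + 1 * (m - i) = m := by omega
      rw [e2, List.reverse_append, List.flatMap_append]
      simp [List.append_assoc]

lemma csfList_split_head (m j : ℕ) (a b : ℕ → ℕ) (h : j < m) :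
    csfList m a b =
      (((List.range' (j + 1) (m - j - 1)).reverse.flatMap fun i =>
        List.range' (a i) (b i + 1 - a i)) ++ List.range' (a j) (b j + 1 - a j))
        ++ csfList j a b := by
  rw [csfList_split m j a b (by omega)]
  congr 1
  have e : m - j = (m - j - 1) + 1 := by omega
  rw [e, List.range'_succ, List.reverse_cons, List.flatMap_append]
  simp

lemma moveLeft (Q : List ℕ) (x : ℕ) (hQ : ∀ y ∈ Q, y + 1 < x) :
    ∀ W : List ℕ, TupleEquiv (W ++ Q ++ [x]) (W ++ x :: Q) := by
  induction Q with
  | nil => intro W; simpa using TupleEquiv.refl (W ++ [x])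
  | cons q Q ih =>
    intro W
    have hq : q + 1 < x := hQ q List.mem_cons_self
    have step1 : TupleEquiv ((W ++ [q]) ++ Q ++ [x]) ((W ++ [q]) ++ x :: Q) :=
      ih (fun y hy => hQ y (List.mem_cons_of_mem q hy)) (W ++ [q])
    have e1 : (W ++ [q]) ++ Q ++ [x] = W ++ (q :: Q) ++ [x] := by simp
    have e2 : (W ++ [q]) ++ x :: Q = W ++ q :: x :: Q := by simp
    rw [e1, e2] at step1
    refine step1.trans ?_
    exact TupleEquiv.swap W Q q x (by omega) (by omega) (by omega)

/-! ### SIP consequences -/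

lemma sip_mid (U V : List ℕ) (z : ℕ) (h : SIP (U ++ z :: (V ++ [z]))) :
    ∃ v ∈ V, v = z + 1 := by
  have hlen : (U ++ z :: (V ++ [z])).length = U.length + V.length + 2 := by
    simp; omega
  have ha : U.length < (U ++ z :: (V ++ [z])).length := by omega
  have hb : U.length + V.length + 1 < (U ++ z :: (V ++ [z])).length := by omega
  have h1 : (U ++ z :: (V ++ [z])).get ⟨U.length, ha⟩ = z := by
    rw [List.get_eq_getElem, List.getElem_append_right (le_refl U.length)]
    simp
  have h2 : (U ++ z :: (V ++ [z])).get ⟨U.length + V.length + 1, hb⟩ = z := by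
    rw [List.get_eq_getElem,
      List.getElem_append_right (by omega : U.length ≤ U.length + V.length + 1)]
    have e : U.length + V.length + 1 - U.length = V.length + 1 := by omega
    simp only [e, List.getElem_cons_succ]
    rw [List.getElem_append_right (le_refl V.length)]
    simp
  obtain ⟨c, hc, hac, hcb, hval⟩ := h U.length (U.length + V.length + 1) ha hb
    (by omega) (h1.trans h2.symm)
  refine ⟨(U ++ z :: (V ++ [z])).get ⟨c, hc⟩, ?_, by rw [hval, h1]⟩
  rw [List.get_eq_getElem, List.getElem_append_right (by omega : U.length ≤ c)]
  obtain ⟨d, hd⟩ : ∃ d, c - U.length = d + 1 := ⟨c - U.length - 1, by omega⟩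
  simp only [hd, List.getElem_cons_succ]
  rw [List.getElem_append_left (by omega : d < V.length)]
  exact List.getElem_mem _

lemma sip_not_head (s : ℕ) (a b : ℕ → ℕ)
    (hmono : ∀ i j : ℕ, i < j → j < s → b i < b j)
    (hab : ∀ j < s, a j ≤ b j)
    (x : ℕ) (hsip : SIP (csfList s a b ++ [x])) :
    ∀ i < s, x ≠ b i := by
  intro i hi hxe
  have habi : a i ≤ b i := hab i hi
  have hsplit := csfList_split_head s i a b hi
  have estr : List.range' (a i) (b i + 1 - a i) =
      List.range' (a i) (b i - a i) ++ [b i] := by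
    have e : b i + 1 - a i = (b i - a i) + 1 := by omega
    rw [e, List.range'_concat]
    congr 2
    omega
  set T := (List.range' (i + 1) (s - i - 1)).reverse.flatMap fun j =>
    List.range' (a j) (b j + 1 - a j) with hT
  have hdec : csfList s a b ++ [x] =
      (T ++ List.range' (a i) (b i - a i)) ++ b i :: (csfList i a b ++ [x]) := by
    rw [hsplit, estr]
    simp [List.append_assoc]
  rw [hdec, hxe] at hsip
  obtain ⟨v, hv, hv1⟩ := sip_mid _ _ _ hsip
  obtain ⟨j, hj, _, hle⟩ := csfList_mem hv
  have := hmono j i hj hi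
  omega

/-! ### shifted csfList -/

lemma csfList_shift (m : ℕ) (a b a' b' : ℕ → ℕ)
    (ha : ∀ i, a' (i + 1) = a i) (hb : ∀ i, b' (i + 1) = b i) :
    csfList (m + 1) a' b' = csfList m a b ++ List.range' (a' 0) (b' 0 + 1 - a' 0) := by
  induction m with
  | zero =>
    rw [csfList_succ 0 a' b']
    simp [csfList]
  | succ m ih =>
    rw [csfList_succ (m + 1) a' b', ih, csfList_succ m a b, ha m, hb m,
      List.append_assoc]

/-- let `t = (a_{s-1}:b_{s-1}, ..., a_0:b_0)` be a nonempty tuple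
in column standard form with indices from `{0,...,k-1}` and let
`x ∈ {0,...,b_{s-1}-1}` be such that `(t, x)` satisfies the SIP.  Then `x` is of
Type I relative to `t` (the column standard form of `(t,x)` has `s` strings) iff
`x - 1` is a head of `t`, i.e. `x = b_j + 1` for some `j`; in particular `x = 0`
is always of Type II (the column standard form of `(t,0)` has `s+1` strings). -/
theorem stmt17 (k s : ℕ) (hs : 1 ≤ s) (hk : 1 ≤ k) (a b : ℕ → ℕ)
    (hmono : ∀ i j : ℕ, i < j → j < s → b i < b j)
    (hab : ∀ j < s, a j ≤ b j)
    (hbk : ∀ j < s, b j ≤ k - 1)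
    (x : ℕ) (hx : x < b (s - 1))
    (hsip : SIP (csfList s a b ++ [x])) :
    (StringCount (csfList s a b ++ [x]) s ↔ ∃ j < s, x = b j + 1) ∧
    (x = 0 → StringCount (csfList s a b ++ [x]) (s + 1)) := by
  have hxb : ∀ i < s, x ≠ b i := sip_not_head s a b hmono hab x hsip
  constructor
  · constructor
    · -- Type I implies x - 1 is a head
      intro hsc
      by_contra hne
      push_neg at hne
      have h1 := stringCount_scf hsc
      have h2 := scf_csfList_neg s a b x hmono hab hne
      omega
    · -- x = b j + 1 : construct a csf with s strings
      rintro ⟨j, hj, hxe⟩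
      have habj : a j ≤ b j := hab j hj
      refine ⟨a, fun i => if i = j then b j + 1 else b i, ?_, ?_, ?_⟩
      · intro i i' h1 h2
        have hm := hmono i i' h1 h2
        have hx' := hxb i' h2
        show (if i = j then b j + 1 else b i) < (if i' = j then b j + 1 else b i')
        by_cases hi : i = j
        · rw [if_pos hi, if_neg (by omega : ¬ i' = j)]
          rw [hi] at hm
          omega
        · rw [if_neg hi]
          by_cases hi' : i' = j
          · rw [if_pos hi']
            rw [hi'] at hm
            omega
          · rw [if_neg hi']
            omega
      · intro i hi
        show a i ≤ if i = j then b j + 1 else b i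
        by_cases h : i = j
        · rw [if_pos h, h]
          omega
        · rw [if_neg h]
          exact hab i hi
      · have hsplit := csfList_split_head s j a b hj
        have hsplit' := csfList_split_head s j a
          (fun i => if i = j then b j + 1 else b i) hj
        have hT : ((List.range' (j + 1) (s - j - 1)).reverse.flatMap fun i =>
              List.range' (a i) ((if i = j then b j + 1 else b i) + 1 - a i)) =
            ((List.range' (j + 1) (s - j - 1)).reverse.flatMap fun i =>
              List.range' (a i) (b i + 1 - a i)) := by
          apply flatMap_congr_fun
          intro i hi
          rw [List.mem_reverse, List.mem_range'] at hi
          obtain ⟨d, hd, hde⟩ := hi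
          rw [if_neg (by omega : ¬ i = j)]
        have hC : csfList j a (fun i => if i = j then b j + 1 else b i) =
            csfList j a b := by
          apply csfList_congr (fun i _ => rfl)
          intro i hi
          rw [if_neg (by omega : ¬ i = j)]
        have hstr : List.range' (a j) ((if j = j then b j + 1 else b j) + 1 - a j) =
            List.range' (a j) (b j + 1 - a j) ++ [x] := by
          rw [if_pos rfl]
          have e : b j + 1 + 1 - a j = (b j + 1 - a j) + 1 := by omega
          rw [e, List.range'_concat]
          congr 2
          omega
        rw [hT, hC, hstr] at hsplit'
        have key := moveLeft (csfList j a b) x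
          (fun y hy => by
            obtain ⟨j', hj', _, hle⟩ := csfList_mem hy
            have := hmono j' j hj' hj
            omega)
          (((List.range' (j + 1) (s - j - 1)).reverse.flatMap fun i =>
            List.range' (a i) (b i + 1 - a i)) ++ List.range' (a j) (b j + 1 - a j))
        rw [hsplit, hsplit']
        have e2 : (((List.range' (j + 1) (s - j - 1)).reverse.flatMap fun i =>
              List.range' (a i) (b i + 1 - a i)) ++
              (List.range' (a j) (b j + 1 - a j) ++ [x])) ++ csfList j a b =
            (((List.range' (j + 1) (s - j - 1)).reverse.flatMap fun i =>
              List.range' (a i) (b i + 1 - a i)) ++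
              List.range' (a j) (b j + 1 - a j)) ++ x :: csfList j a b := by
          simp [List.append_assoc]
        rw [e2]
        exact key
  · -- x = 0 : Type II
    intro hx0
    have hb0 : ∀ i < s, 0 < b i := fun i hi =>
      Nat.pos_of_ne_zero (fun h => hxb i hi (by omega))
    refine ⟨fun n => if n = 0 then 0 else a (n - 1),
      fun n => if n = 0 then 0 else b (n - 1), ?_, ?_, ?_⟩
    · intro i i' h1 h2
      show (if i = 0 then 0 else b (i - 1)) < (if i' = 0 then 0 else b (i' - 1))
      rw [if_neg (by omega : ¬ i' = 0)]
      by_cases hi : i = 0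
      · rw [if_pos hi]
        exact hb0 (i' - 1) (by omega)
      · rw [if_neg hi]
        exact hmono (i - 1) (i' - 1) (by omega) (by omega)
    · intro i hi
      show (if i = 0 then 0 else a (i - 1)) ≤ (if i = 0 then 0 else b (i - 1))
      by_cases h : i = 0
      · rw [if_pos h, if_pos h]
      · rw [if_neg h, if_neg h]
        exact hab (i - 1) (by omega)
    · have hshift := csfList_shift s a b
        (fun n => if n = 0 then 0 else a (n - 1))
        (fun n => if n = 0 then 0 else b (n - 1))
        (fun i => by simp) (fun i => by simp)
      rw [hshift]
      norm_num [hx0, List.range'_one]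
      exact TupleEquiv.refl _
end
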